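/- Let G be an undirected graph, and construct a directed graph G' as follows: replace each undirected edge {u, v} by directed edges; additionally for each edge {u, v} add a new vertex u' with bidirectional connections to u and v so that every edge of G gives rise to a directed 3-cycle on {u, v, u'} in G'. Then S ⊆ V(G) is a vertex cover of G if and only if there is a hop-constrained cycle cover of G' with k = 3 of size |S| (using only vertices of V(G)), and the minimum vertex cover size of G equals the minimum size of a 3-hop-constrained cycle cover of G'. -/
import Mathlib


variable {V : Type*}

/-- A closed walk of length `h` in a directed graph with edge relation `E`:
`w 0, w 1, …, w h` with consecutive edges and `w 0 = w h`. -/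
def IsClosedWalk (E : V → V → Prop) (h : ℕ) (w : ℕ → V) : Prop :=
  (∀ i < h, E (w i) (w (i + 1))) ∧ w 0 = w h

/-- A simple cycle of length `h`: a closed walk whose first `h` vertices are pairwise distinct. -/
def IsSimpleCycle (E : V → V → Prop) (h : ℕ) (w : ℕ → V) : Prop :=
  IsClosedWalk E h w ∧ ∀ a < h, ∀ b < h, w a = w b → a = b

/-- A hop-constrained cycle cover: a vertex set meeting every simple cycle of length 3..k. -/
def HopCycleCover (E : V → V → Prop) (k : ℕ) (C : Set V) : Prop :=
  ∀ (h : ℕ) (w : ℕ → V), 3 ≤ h → h ≤ k → IsSimpleCycle E h w → ∃ i ≤ h, w i ∈ C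

section Aux

variable (G : SimpleGraph V) (E' : (V ⊕ Sym2 V) → (V ⊕ Sym2 V) → Prop)
  (hE' : ∀ x y, E' x y ↔
      (∃ u v, x = Sum.inl u ∧ y = Sum.inl v ∧ G.Adj u v) ∨
      (∃ u e, ((x = Sum.inl u ∧ y = Sum.inr e) ∨ (x = Sum.inr e ∧ y = Sum.inl u)) ∧
        e ∈ G.edgeSet ∧ u ∈ e))

/-- the gadget walk for an edge -/
def gadgetWalk (u v : V) : ℕ → (V ⊕ Sym2 V) := fun n =>
  if n = 0 then Sum.inl u else if n = 1 then Sum.inl v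
  else if n = 2 then Sum.inr s(u, v) else Sum.inl u

include hE' in
lemma adj_of_inl {a b : V} (h : E' (Sum.inl a) (Sum.inl b)) : G.Adj a b := by
  rcases (hE' _ _).1 h with ⟨u, v, hu, hv, hadj⟩ | ⟨u, e, h1 | h1, _, _⟩
  · cases hu; cases hv; exact hadj
  · exact absurd h1.2 (by simp)
  · exact absurd h1.1 (by simp)

include hE' in
lemma not_inr_inr {e f : Sym2 V} (h : E' (Sum.inr e) (Sum.inr f)) : False := by
  rcases (hE' _ _).1 h with ⟨u, v, hu, _, _⟩ | ⟨u, e', h1 | h1, _, _⟩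
  · exact absurd hu (by simp)
  · exact absurd h1.1 (by simp)
  · exact absurd h1.2 (by simp)

include hE' in
lemma gadget_cycle {u v : V} (huv : G.Adj u v) :
    IsSimpleCycle E' 3 (gadgetWalk u v) := by
  have hne := huv.ne
  refine ⟨⟨?_, by simp [gadgetWalk]⟩, ?_⟩
  · intro i hi
    interval_cases i
    · exact (hE' _ _).2 (Or.inl ⟨u, v, rfl, rfl, huv⟩)
    · exact (hE' _ _).2 (Or.inr ⟨v, s(u, v), Or.inl ⟨rfl, rfl⟩,
        G.mem_edgeSet.2 huv, Sym2.mem_mk_right u v⟩)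
    · exact (hE' _ _).2 (Or.inr ⟨u, s(u, v), Or.inr ⟨rfl, rfl⟩,
        G.mem_edgeSet.2 huv, Sym2.mem_mk_left u v⟩)
  · intro a ha b hb hab
    interval_cases a <;> interval_cases b <;> simp_all [gadgetWalk]

end Aux

/-- NP-hardness gadget. Given an undirected graph G, build the directed
graph G′ on V ⊕ Sym2 V where original vertices are joined by directed edges in both
directions whenever adjacent in G, and for each edge e = {u, v} of G the gadget vertex
e is joined bidirectionally to its two endpoints (so each edge of G yields directed
3-cycles on {u, v, e}). Then S is a vertex cover of G iff Sum.inl '' S (of size |S|,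
using only original vertices) is a 3-hop-constrained cycle cover of G′, and the
minimum vertex cover size of G equals the minimum 3-hop-constrained cycle cover size
of G′. -/
theorem stmt16 {V : Type*} [Finite V] (G : SimpleGraph V)
    (E' : (V ⊕ Sym2 V) → (V ⊕ Sym2 V) → Prop)
    (hE' : ∀ x y, E' x y ↔
      (∃ u v, x = Sum.inl u ∧ y = Sum.inl v ∧ G.Adj u v) ∨
      (∃ u e, ((x = Sum.inl u ∧ y = Sum.inr e) ∨ (x = Sum.inr e ∧ y = Sum.inl u)) ∧
        e ∈ G.edgeSet ∧ u ∈ e)) :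
    (∀ S : Set V, (∀ u v, G.Adj u v → u ∈ S ∨ v ∈ S) ↔
      HopCycleCover E' 3 (Sum.inl '' S)) ∧
    (∀ (S : Set V) (T : Set (V ⊕ Sym2 V)),
      (∀ u v, G.Adj u v → u ∈ S ∨ v ∈ S) →
      (∀ C : Set V, (∀ u v, G.Adj u v → u ∈ C ∨ v ∈ C) → S.ncard ≤ C.ncard) →
      HopCycleCover E' 3 T →
      (∀ C : Set (V ⊕ Sym2 V), HopCycleCover E' 3 C → T.ncard ≤ C.ncard) →
      S.ncard = T.ncard) := by
  have key : ∀ S : Set V, (∀ u v, G.Adj u v → u ∈ S ∨ v ∈ S) ↔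
      HopCycleCover E' 3 (Sum.inl '' S) := by
    intro S
    constructor
    · intro hS h w h3 hk hcyc
      have hh : h = 3 := le_antisymm hk h3
      subst hh
      obtain ⟨⟨hed, hcl⟩, _⟩ := hcyc
      have e01 := hed 0 (by norm_num)
      have e12 := hed 1 (by norm_num)
      have e23 := hed 2 (by norm_num)
      rw [← hcl] at e23
      -- at most one vertex among w0 w1 w2 is inr; find a consecutive inl-inl pair
      rcases hw0 : w 0 with a0 | f0 <;> rcases hw1 : w 1 with a1 | f1 <;>
        rcases hw2 : w 2 with a2 | f2
      · -- all inl : use edge 0-1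
        rw [hw0, hw1] at e01
        rcases hS a0 a1 (adj_of_inl G E' hE' e01) with h | h
        · exact ⟨0, by norm_num, a0, h, hw0.symm⟩
        · exact ⟨1, by norm_num, a1, h, hw1.symm⟩
      · -- inr at 2 : use edge 0-1
        rw [hw0, hw1] at e01
        rcases hS a0 a1 (adj_of_inl G E' hE' e01) with h | h
        · exact ⟨0, by norm_num, a0, h, hw0.symm⟩
        · exact ⟨1, by norm_num, a1, h, hw1.symm⟩
      · -- inr at 1 : use edge 2-0
        rw [hw2, hw0] at e23
        rcases hS a2 a0 (adj_of_inl G E' hE' e23) with h | h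
        · exact ⟨2, by norm_num, a2, h, hw2.symm⟩
        · exact ⟨0, by norm_num, a0, h, hw0.symm⟩
      · rw [hw1, hw2] at e12; exact absurd e12 (fun h => not_inr_inr G E' hE' h)
      · -- inr at 0 : use edge 1-2
        rw [hw1, hw2] at e12
        rcases hS a1 a2 (adj_of_inl G E' hE' e12) with h | h
        · exact ⟨1, by norm_num, a1, h, hw1.symm⟩
        · exact ⟨2, by norm_num, a2, h, hw2.symm⟩
      · rw [hw2, hw0] at e23; exact absurd e23 (fun h => not_inr_inr G E' hE' h)
      · rw [hw0, hw1] at e01; exact absurd e01 (fun h => not_inr_inr G E' hE' h)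
      · rw [hw0, hw1] at e01; exact absurd e01 (fun h => not_inr_inr G E' hE' h)
    · intro hC u v huv
      obtain ⟨i, hi, x, hx, hxi⟩ := hC 3 (gadgetWalk u v) le_rfl le_rfl
        (gadget_cycle G E' hE' huv)
      interval_cases i <;> simp only [gadgetWalk] at hxi <;> simp_all
  refine ⟨key, ?_⟩
  intro S T hScov hSmin hTcov hTmin
  have le1 : T.ncard ≤ S.ncard := by
    have := hTmin (Sum.inl '' S) ((key S).1 hScov)
    rwa [Set.ncard_image_of_injective _ Sum.inl_injective] at this
  rcases isEmpty_or_nonempty V with hV | hV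
  · have hS0 : S.ncard = 0 := by simp [Set.eq_empty_of_isEmpty S]
    omega
  · classical
    set f : (V ⊕ Sym2 V) → V :=
      Sum.elim id (fun e => if h : ∃ a, a ∈ e then h.choose else hV.some) with hf
    have hCcov : ∀ u v, G.Adj u v → u ∈ f '' T ∨ v ∈ f '' T := by
      intro u v huv
      obtain ⟨i, hi, hw⟩ := hTcov 3 (gadgetWalk u v) le_rfl le_rfl
        (gadget_cycle G E' hE' huv)
      interval_cases i <;> simp only [gadgetWalk] at hw <;> norm_num at hw
      · exact Or.inl ⟨_, hw, rfl⟩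
      · exact Or.inr ⟨_, hw, rfl⟩
      · have hex : ∃ a, a ∈ s(u, v) := ⟨u, Sym2.mem_mk_left u v⟩
        have hch := hex.choose_spec
        have hfval : f (Sum.inr s(u, v)) = hex.choose := by simp [hf, dif_pos hex]
        rcases Sym2.mem_iff.1 hch with h | h
        · exact Or.inl ⟨_, hw, by rw [hfval, h]⟩
        · exact Or.inr ⟨_, hw, by rw [hfval, h]⟩
      · exact Or.inl ⟨_, hw, rfl⟩
    have le2 : S.ncard ≤ T.ncard :=
      le_trans (hSmin _ hCcov) (Set.ncard_image_le T.toFinite)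
    omega
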